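/- For all t ≥ 0: (a) m_2^{(1)}(4, 3t+2) = 15t + 8; (b) m_2^{(1)}(4, 3t+3) = 15t + 15; (c) m_2^{(1)}(4, 3t+4) = 15t + 16. Here m_2^{(1)}(4, w) is the maximum size of a multiset of points in PG(3,2) such that every line contains at most w points (counted with multiplicity). -/

import Mathlib

open Module

/-- Multiplicity of a subspace `S` with respect to a multiset of points `K` of `PG(3,2)`. -/
noncomputable def msMult (K : Submodule (ZMod 2) (Fin 4 → ZMod 2) → ℕ)
    (S : Submodule (ZMod 2) (Fin 4 → ZMod 2)) : ℕ :=
  ∑ᶠ P ∈ {P : Submodule (ZMod 2) (Fin 4 → ZMod 2) | finrank (ZMod 2) P = 1 ∧ P ≤ S}, K P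

/-- `m_2^{(1)}(4, w)`: the maximal total multiplicity of a multiset of points in `PG(3,2)`
such that every line (2-dimensional linear subspace) has multiplicity at most `w`. -/
noncomputable def m214 (w : ℕ) : Set ℕ :=
  {n | ∃ K : Submodule (ZMod 2) (Fin 4 → ZMod 2) → ℕ,
    (∀ S : Submodule (ZMod 2) (Fin 4 → ZMod 2), finrank (ZMod 2) S = 2 → msMult K S ≤ w) ∧
    msMult K ⊤ = n}


open Submodule Finset

abbrev Vv := Fin 4 → ZMod 2

noncomputable instance : DecidableEq (Submodule (ZMod 2) Vv) := Classical.decEq _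

def Uu : Finset Vv := Finset.univ.filter (· ≠ 0)

lemma mem_Uu {v : Vv} : v ∈ Uu ↔ v ≠ 0 := by simp [Uu]

lemma mem_span_single {v w : Vv} (hv : v ≠ 0) :
    w ∈ span (ZMod 2) {v} ↔ w = 0 ∨ w = v := by
  rw [Submodule.mem_span_singleton]
  constructor
  · rintro ⟨c, rfl⟩
    rcases (show ∀ c : ZMod 2, c = 0 ∨ c = 1 by decide) c with rfl | rfl <;> simp
  · rintro (rfl | rfl)
    exacts [⟨0, by simp⟩, ⟨1, by simp⟩]

lemma span_inj {u v : Vv} (hu : u ≠ 0) (hv : v ≠ 0) :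
    span (ZMod 2) {u} = span (ZMod 2) {v} ↔ u = v := by
  constructor
  · intro h
    have : u ∈ span (ZMod 2) {v} := h ▸ Submodule.mem_span_singleton_self u
    rcases (mem_span_single hv).1 this with h0 | h1
    · exact absurd h0 hu
    · exact h1
  · rintro rfl; rfl

lemma rank_one_iff {P : Submodule (ZMod 2) Vv} :
    finrank (ZMod 2) P = 1 ↔ ∃ v : Vv, v ≠ 0 ∧ P = span (ZMod 2) {v} := by
  constructor
  · intro h
    have hbot : P ≠ ⊥ := by
      intro hb
      rw [hb, finrank_bot] at h
      omega
    obtain ⟨v, hvP, hv⟩ := Submodule.exists_mem_ne_zero_of_ne_bot hbot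
    refine ⟨v, hv, ?_⟩
    have hle : span (ZMod 2) {v} ≤ P := (span_le).2 (by simpa using hvP)
    exact (eq_of_le_of_finrank_eq hle (by rw [finrank_span_singleton hv, h])).symm
  · rintro ⟨v, hv, rfl⟩
    exact finrank_span_singleton hv

lemma msMult_top (K : Submodule (ZMod 2) Vv → ℕ) :
    msMult K ⊤ = ∑ v ∈ Uu, K (span (ZMod 2) {v}) := by
  have hset : {P : Submodule (ZMod 2) Vv | finrank (ZMod 2) P = 1 ∧ P ≤ ⊤}
      = ↑(Uu.image (fun v => span (ZMod 2) {v})) := by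
    ext P
    simp only [Set.mem_setOf_eq, le_top, and_true, coe_image, Set.mem_image, mem_coe, mem_Uu]
    rw [rank_one_iff]
    constructor
    · rintro ⟨v, hv, rfl⟩; exact ⟨v, hv, rfl⟩
    · rintro ⟨v, hv, rfl⟩; exact ⟨v, hv, rfl⟩
  rw [msMult, hset, finsum_mem_coe_finset]
  rw [Finset.sum_image]
  intro u hu v hv h
  exact (span_inj (mem_Uu.1 hu) (mem_Uu.1 hv)).1 h

lemma self_ne_add {u v : Vv} (hv : v ≠ 0) : u ≠ u + v := by
  intro h
  apply hv
  funext i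
  have := congrFun h i
  simp only [Pi.add_apply, Pi.zero_apply]
  have key : ∀ a b : ZMod 2, a = a + b → b = 0 := by decide
  exact key _ _ this

lemma addNeZero {u v : Vv} (huv : u ≠ v) : u + v ≠ 0 := by
  intro h
  apply huv
  funext i
  have := congrFun h i
  simp only [Pi.add_apply, Pi.zero_apply] at this
  have key : ∀ a b : ZMod 2, a + b = 0 → a = b := by decide
  exact key _ _ this

lemma msMult_line (K : Submodule (ZMod 2) Vv → ℕ) {u v : Vv}
    (hu : u ≠ 0) (hv : v ≠ 0) (huv : u ≠ v) :
    msMult K (span (ZMod 2) ({u, v} : Set Vv))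
      = K (span (ZMod 2) {u}) + K (span (ZMod 2) {v}) + K (span (ZMod 2) {u + v}) := by
  have huv0 : u + v ≠ 0 := addNeZero huv
  have huuv : u ≠ u + v := self_ne_add hv
  have hvuv : v ≠ u + v := by
    rw [add_comm]; exact self_ne_add hu
  have hus : u ∈ span (ZMod 2) ({u, v} : Set Vv) := subset_span (by simp)
  have hvs : v ∈ span (ZMod 2) ({u, v} : Set Vv) := subset_span (by simp)
  have hset : {P : Submodule (ZMod 2) Vv | finrank (ZMod 2) P = 1 ∧ P ≤ span (ZMod 2) ({u, v} : Set Vv)}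
      = ↑({span (ZMod 2) {u}, span (ZMod 2) {v}, span (ZMod 2) {u + v}} :
          Finset (Submodule (ZMod 2) Vv)) := by
    ext P
    simp only [Set.mem_setOf_eq, coe_insert, Set.mem_insert_iff, coe_singleton,
      Set.mem_singleton_iff]
    constructor
    · rintro ⟨h1, h2⟩
      obtain ⟨w, hw, rfl⟩ := rank_one_iff.1 h1
      have hwm : w ∈ span (ZMod 2) ({u, v} : Set Vv) :=
        h2 (Submodule.mem_span_singleton_self w)
      rw [Submodule.mem_span_pair] at hwm
      obtain ⟨a, b, hab⟩ := hwm
      rcases (show ∀ c : ZMod 2, c = 0 ∨ c = 1 by decide) a with rfl | rfl <;> rcases (show ∀ c : ZMod 2, c = 0 ∨ c = 1 by decide) b with rfl | rfl <;> simp_all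
    · rintro (rfl | rfl | rfl)
      · exact ⟨finrank_span_singleton hu, (span_le).2 (by simpa using hus)⟩
      · exact ⟨finrank_span_singleton hv, (span_le).2 (by simpa using hvs)⟩
      · exact ⟨finrank_span_singleton huv0, (span_le).2
          (by simpa using add_mem hus hvs)⟩
  rw [msMult, hset, finsum_mem_coe_finset]
  rw [Finset.sum_insert (by simp [span_inj hu hv, span_inj hu huv0, huv, huuv]),
    Finset.sum_insert (by simp [span_inj hv huv0, hvuv]),
    Finset.sum_singleton]
  omega

lemma card_Uu : Uu.card = 15 := by decide

lemma finrank_line {u v : Vv} (hu : u ≠ 0) (hv : v ≠ 0) (huv : u ≠ v) :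
    finrank (ZMod 2) (span (ZMod 2) ({u, v} : Set Vv)) = 2 := by
  have hli : LinearIndependent (ZMod 2) ![u, v] := by
    rw [linearIndependent_fin2]
    refine ⟨by simpa using hv, fun a => ?_⟩
    rcases (show ∀ c : ZMod 2, c = 0 ∨ c = 1 by decide) a with rfl | rfl <;> simp [Ne.symm hu, Ne.symm huv]
  have hrange : Set.range ![u, v] = {u, v} := by
    ext w
    simp [Fin.exists_fin_two]
    tauto
  have := finrank_span_eq_card hli
  rwa [hrange, Fintype.card_fin] at this

lemma line_decomp {S : Submodule (ZMod 2) Vv} (hS : finrank (ZMod 2) S = 2) :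
    ∃ u v : Vv, u ≠ 0 ∧ v ≠ 0 ∧ u ≠ v ∧ S = span (ZMod 2) ({u, v} : Set Vv) := by
  haveI : FiniteDimensional (ZMod 2) S := inferInstance
  let b : Basis (Fin 2) (ZMod 2) S := Module.finBasisOfFinrankEq (ZMod 2) S hS
  refine ⟨(b 0 : Vv), (b 1 : Vv), ?_, ?_, ?_, ?_⟩
  · simpa using b.ne_zero 0
  · simpa using b.ne_zero 1
  · intro h
    have := b.injective (Subtype.val_injective h)
    simp at this
  · have h1 : span (ZMod 2) (Set.range b) = (⊤ : Submodule (ZMod 2) S) := b.span_eq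
    have h2 := congrArg (Submodule.map S.subtype) h1
    rw [Submodule.map_span, Submodule.map_subtype_top] at h2
    have h3 : S.subtype '' Set.range b = {(b 0 : Vv), (b 1 : Vv)} := by
      ext w
      simp [Fin.exists_fin_two, eq_comm]
    rw [h3] at h2
    exact h2.symm

lemma upper_bd {w c target : ℕ}
    (hc : ∀ a T : ℕ, 6 * a + T ≤ 7 * w → target + 1 ≤ T → a ≤ c)
    (hct : 15 * c ≤ target)
    (K : Submodule (ZMod 2) Vv → ℕ)
    (hK : ∀ S : Submodule (ZMod 2) Vv, finrank (ZMod 2) S = 2 → msMult K S ≤ w) :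
    msMult K ⊤ ≤ target := by
  rw [msMult_top]
  by_contra hcon
  push_neg at hcon
  set f : Vv → ℕ := fun x => K (span (ZMod 2) {x}) with hf
  have key : ∀ v ∈ Uu, 6 * f v + (∑ x ∈ Uu, f x) ≤ 7 * w := by
    intro v hvU
    have hv : v ≠ 0 := mem_Uu.1 hvU
    have hcard : (Uu.erase v).card = 14 := by
      rw [Finset.card_erase_of_mem hvU, card_Uu]
    have h14 : ∑ x ∈ Uu.erase v, (f v + f x + f (v + x)) ≤ 14 * w := by
      calc ∑ x ∈ Uu.erase v, (f v + f x + f (v + x)) ≤ ∑ _x ∈ Uu.erase v, w := by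
            apply Finset.sum_le_sum
            intro x hx
            obtain ⟨hxv, hxU⟩ := Finset.mem_erase.1 hx
            have hx0 : x ≠ 0 := mem_Uu.1 hxU
            have hvx : v ≠ x := Ne.symm hxv
            have := hK (span (ZMod 2) ({v, x} : Set Vv)) (finrank_line hv hx0 hvx)
            rwa [msMult_line K hv hx0 hvx] at this
        _ = 14 * w := by rw [Finset.sum_const, hcard, smul_eq_mul]
    have hsplit : ∑ x ∈ Uu.erase v, (f v + f x + f (v + x))
        = (∑ _x ∈ Uu.erase v, f v) + (∑ x ∈ Uu.erase v, f x)
          + (∑ x ∈ Uu.erase v, f (v + x)) := by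
      rw [← Finset.sum_add_distrib, ← Finset.sum_add_distrib]
    have hconst : ∑ _x ∈ Uu.erase v, f v = 14 * f v := by
      rw [Finset.sum_const, hcard, smul_eq_mul]
    have hcancel : ∀ a b : ZMod 2, a + (a + b) = b := by decide
    have hbij : ∑ x ∈ Uu.erase v, f (v + x) = ∑ x ∈ Uu.erase v, f x := by
      apply Finset.sum_nbij' (i := fun x => v + x) (j := fun x => v + x)
      · intro x hx
        obtain ⟨hxv, hxU⟩ := Finset.mem_erase.1 hx
        exact Finset.mem_erase.2 ⟨Ne.symm (self_ne_add (mem_Uu.1 hxU)),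
          mem_Uu.2 (addNeZero (Ne.symm hxv))⟩
      · intro x hx
        obtain ⟨hxv, hxU⟩ := Finset.mem_erase.1 hx
        exact Finset.mem_erase.2 ⟨Ne.symm (self_ne_add (mem_Uu.1 hxU)),
          mem_Uu.2 (addNeZero (Ne.symm hxv))⟩
      · intro x _
        funext i
        exact hcancel _ _
      · intro x _
        funext i
        exact hcancel _ _
      · intro x _
        rfl
    have hT : f v + ∑ x ∈ Uu.erase v, f x = ∑ x ∈ Uu, f x :=
      Finset.add_sum_erase _ f hvU
    omega
  have hfc : ∀ v ∈ Uu, f v ≤ c := fun v hv => hc _ _ (key v hv) hcon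
  have hsum : ∑ v ∈ Uu, f v ≤ 15 * c := by
    calc ∑ v ∈ Uu, f v ≤ ∑ _v ∈ Uu, c := Finset.sum_le_sum hfc
      _ = 15 * c := by rw [Finset.sum_const, card_Uu, smul_eq_mul]
  have heta : Uu.sum f = ∑ v ∈ Uu, f v := rfl
  omega

noncomputable def Kof (f : Vv → ℕ) : Submodule (ZMod 2) Vv → ℕ :=
  fun S => ∑ v ∈ Uu.filter (fun v => span (ZMod 2) {v} = S), f v

lemma Kof_span (f : Vv → ℕ) {v : Vv} (hv : v ≠ 0) :
    Kof f (span (ZMod 2) {v}) = f v := by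
  have hfil : Uu.filter (fun w => span (ZMod 2) {w} = span (ZMod 2) {v}) = {v} := by
    ext w
    simp only [Finset.mem_filter, mem_Uu, Finset.mem_singleton]
    constructor
    · rintro ⟨hw, h⟩
      exact (span_inj hw hv).1 h
    · rintro rfl
      exact ⟨hv, rfl⟩
  rw [Kof, hfil, Finset.sum_singleton]

lemma mem_lower {w : ℕ} (f : Vv → ℕ)
    (hf : ∀ u v : Vv, u ≠ 0 → v ≠ 0 → u ≠ v → f u + f v + f (u + v) ≤ w) :
    (∑ v ∈ Uu, f v) ∈ m214 w := by
  refine ⟨Kof f, ?_, ?_⟩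
  · intro S hS
    obtain ⟨u, v, hu, hv, huv, rfl⟩ := line_decomp hS
    rw [msMult_line _ hu hv huv, Kof_span f hu, Kof_span f hv, Kof_span f (addNeZero huv)]
    exact hf u v hu hv huv
  · rw [msMult_top]
    exact Finset.sum_congr rfl fun v hv => Kof_span f (mem_Uu.1 hv)

def ee : Vv := ![1, 0, 0, 0]

/-- For all `t ≥ 0`: `m_2^{(1)}(4, 3t+2) = 15t+8`, `m_2^{(1)}(4, 3t+3) = 15t+15`, and
`m_2^{(1)}(4, 3t+4) = 15t+16`. -/
theorem stmt11 (t : ℕ) :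
    IsGreatest (m214 (3 * t + 2)) (15 * t + 8) ∧
    IsGreatest (m214 (3 * t + 3)) (15 * t + 15) ∧
    IsGreatest (m214 (3 * t + 4)) (15 * t + 16) := by
  refine ⟨⟨?_, ?_⟩, ⟨?_, ?_⟩, ⟨?_, ?_⟩⟩
  · -- membership, case a
    have key : ∀ a b : ZMod 2,
        (if a = 1 then (1:ℕ) else 0) + (if b = 1 then 1 else 0)
          + (if a + b = 1 then 1 else 0) ≤ 2 := by decide
    have h := mem_lower (w := 3 * t + 2) (fun v => t + if v 3 = 1 then 1 else 0)
      (fun u v hu hv huv => by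
        beta_reduce
        simp only [Pi.add_apply]
        have := key (u 3) (v 3)
        omega)
    have hsum : ∑ v ∈ Uu, (t + if v 3 = 1 then (1:ℕ) else 0) = 15 * t + 8 := by
      rw [Finset.sum_add_distrib, Finset.sum_const, card_Uu, smul_eq_mul]
      have h8 : ∑ v ∈ Uu, (if v 3 = 1 then (1:ℕ) else 0) = 8 := by decide
      rw [h8]
    rwa [hsum] at h
  · rintro n ⟨K, hK, rfl⟩
    exact upper_bd (c := t) (by intros; omega) (by omega) K hK
  · -- membership, case b
    have h := mem_lower (w := 3 * t + 3) (fun _ => t + 1)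
      (fun u v hu hv huv => by beta_reduce; omega)
    have hsum : ∑ _v ∈ Uu, (t + 1) = 15 * t + 15 := by
      rw [Finset.sum_const, card_Uu, smul_eq_mul]
      omega
    rwa [hsum] at h
  · rintro n ⟨K, hK, rfl⟩
    exact upper_bd (c := t) (by intros; omega) (by omega) K hK
  · -- membership, case c
    have h := mem_lower (w := 3 * t + 4) (fun v => (t + 1) + if v = ee then 1 else 0)
      (fun u v hu hv huv => by
        beta_reduce
        have huuv : u ≠ u + v := self_ne_add hv
        have hvuv : v ≠ u + v := by rw [add_comm]; exact self_ne_add hu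
        by_cases hue : u = ee
        · rw [if_pos hue, if_neg (fun h => huv (hue.trans h.symm)),
            if_neg (fun h => huuv (hue.trans h.symm))]
          omega
        · by_cases hve : v = ee
          · rw [if_neg hue, if_pos hve, if_neg (fun h => hvuv (hve.trans h.symm))]
            omega
          · by_cases hse : u + v = ee
            · rw [if_neg hue, if_neg hve, if_pos hse]
              omega
            · rw [if_neg hue, if_neg hve, if_neg hse]
              omega)
    have hsum : ∑ v ∈ Uu, ((t + 1) + if v = ee then (1:ℕ) else 0) = 15 * t + 16 := by
      rw [Finset.sum_add_distrib, Finset.sum_const, card_Uu, smul_eq_mul]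
      have h1 : ∑ v ∈ Uu, (if v = ee then (1:ℕ) else 0) = 1 := by decide
      rw [h1]
      ring
    rwa [hsum] at h
  · rintro n ⟨K, hK, rfl⟩
    exact upper_bd (c := t + 1) (by intros; omega) (by omega) K hK
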